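/- Let β₁ < β₂ < β₃ be real numbers and let ε : Fin d → ℝ take at least three distinct values (i.e., there exist indices n₁, n₂, n₃ with ε_{n₁}, ε_{n₂}, ε_{n₃} pairwise distinct). Then the three vectors g_i : Fin d → ℝ defined by (g_i)_n := exp(−β_i ε_n), i = 1, 2, 3, are linearly independent over ℝ. In particular, the Gibbs distributions at three distinct inverse temperatures are linearly independent. -/

import Mathlib

open Finset Real

private lemma lemA {b c x y : ℝ} (hb : b ≠ 0) (hxy : x ≠ y)
    (h : c * Real.exp (b * x) = c * Real.exp (b * y)) : c = 0 := by
  by_contra hc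
  have h2 := mul_left_cancel₀ hc h
  rw [Real.exp_eq_exp] at h2
  exact hxy (mul_left_cancel₀ hb h2)

private lemma lemB {b₁ b₂ c₁ c₂ x y : ℝ} (hb : b₁ ≠ b₂) (hxy : x ≠ y)
    (h1 : c₁ * Real.exp (b₁ * x) + c₂ * Real.exp (b₂ * x) = 0)
    (h2 : c₁ * Real.exp (b₁ * y) + c₂ * Real.exp (b₂ * y) = 0) : c₁ = 0 ∧ c₂ = 0 := by
  have key : ∀ z : ℝ, c₁ * Real.exp (b₁ * z) + c₂ * Real.exp (b₂ * z) = 0 →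
      c₁ * Real.exp ((b₁ - b₂) * z) = -c₂ := by
    intro z hz
    have hne := (Real.exp_pos (b₂ * z)).ne'
    have e : (b₁ - b₂) * z = b₁ * z - b₂ * z := by ring
    rw [e, Real.exp_sub]
    field_simp
    rw [mul_comm z b₂]
    linarith
  have hc1 : c₁ = 0 := lemA (sub_ne_zero.mpr hb) hxy ((key x h1).trans (key y h2).symm)
  refine ⟨hc1, ?_⟩
  rw [hc1, zero_mul, zero_add] at h1
  exact (mul_eq_zero.mp h1).resolve_right (Real.exp_ne_zero _)

private lemma lemC {b₁ b₂ c₁ c₂ c₃ x₁ x₂ x₃ : ℝ} (hb : b₁ ≠ b₂) (hb1 : b₁ ≠ 0) (hb2 : b₂ ≠ 0)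
    (hx12 : x₁ < x₂) (hx23 : x₂ < x₃)
    (h1 : c₁ * Real.exp (b₁ * x₁) + c₂ * Real.exp (b₂ * x₁) + c₃ = 0)
    (h2 : c₁ * Real.exp (b₁ * x₂) + c₂ * Real.exp (b₂ * x₂) + c₃ = 0)
    (h3 : c₁ * Real.exp (b₁ * x₃) + c₂ * Real.exp (b₂ * x₃) + c₃ = 0) :
    c₁ = 0 ∧ c₂ = 0 ∧ c₃ = 0 := by
  set f : ℝ → ℝ := fun x => c₁ * Real.exp (b₁ * x) + c₂ * Real.exp (b₂ * x) + c₃ with hf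
  have hd : ∀ x : ℝ, HasDerivAt f (c₁ * b₁ * Real.exp (b₁ * x) + c₂ * b₂ * Real.exp (b₂ * x)) x := by
    intro x
    have e1 : HasDerivAt (fun x : ℝ => b₁ * x) b₁ x := by
      simpa using (hasDerivAt_id x).const_mul b₁
    have e2 : HasDerivAt (fun x : ℝ => b₂ * x) b₂ x := by
      simpa using (hasDerivAt_id x).const_mul b₂
    have d1 : HasDerivAt (fun x : ℝ => Real.exp (b₁ * x)) (Real.exp (b₁ * x) * b₁) x := e1.exp
    have d2 : HasDerivAt (fun x : ℝ => Real.exp (b₂ * x)) (Real.exp (b₂ * x) * b₂) x := e2.exp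
    exact (((d1.const_mul c₁).add (d2.const_mul c₂)).add_const c₃).congr_deriv (by ring)
  have hderiv : ∀ x : ℝ, deriv f x = c₁ * b₁ * Real.exp (b₁ * x) + c₂ * b₂ * Real.exp (b₂ * x) :=
    fun x => (hd x).deriv
  have hcont : Continuous f := by
    fun_prop
  have r1 : ∃ y ∈ Set.Ioo x₁ x₂, deriv f y = 0 :=
    exists_deriv_eq_zero hx12 hcont.continuousOn (by simp only [hf]; linarith)
  have r2 : ∃ y ∈ Set.Ioo x₂ x₃, deriv f y = 0 :=
    exists_deriv_eq_zero hx23 hcont.continuousOn (by simp only [hf]; linarith)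
  obtain ⟨y₁, hy₁, hdy₁⟩ := r1
  obtain ⟨y₂, hy₂, hdy₂⟩ := r2
  rw [hderiv] at hdy₁ hdy₂
  have hyne : y₁ ≠ y₂ := ne_of_lt (lt_trans hy₁.2 hy₂.1)
  obtain ⟨hc1, hc2⟩ := lemB hb hyne hdy₁ hdy₂
  have hc1' : c₁ = 0 := by
    rcases mul_eq_zero.mp hc1 with h | h
    · exact h
    · exact absurd h hb1
  have hc2' : c₂ = 0 := by
    rcases mul_eq_zero.mp hc2 with h | h
    · exact h
    · exact absurd h hb2
  refine ⟨hc1', hc2', ?_⟩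
  rw [hc1', hc2'] at h1
  simpa using h1

private lemma lemC' {b₁ b₂ c₁ c₂ c₃ x₁ x₂ x₃ : ℝ} (hb : b₁ ≠ b₂) (hb1 : b₁ ≠ 0) (hb2 : b₂ ≠ 0)
    (h12 : x₁ ≠ x₂) (h13 : x₁ ≠ x₃) (h23 : x₂ ≠ x₃)
    (h1 : c₁ * Real.exp (b₁ * x₁) + c₂ * Real.exp (b₂ * x₁) + c₃ = 0)
    (h2 : c₁ * Real.exp (b₁ * x₂) + c₂ * Real.exp (b₂ * x₂) + c₃ = 0)
    (h3 : c₁ * Real.exp (b₁ * x₃) + c₂ * Real.exp (b₂ * x₃) + c₃ = 0) :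
    c₁ = 0 ∧ c₂ = 0 ∧ c₃ = 0 := by
  rcases lt_trichotomy x₁ x₂ with a | a | a
  · rcases lt_trichotomy x₂ x₃ with b | b | b
    · exact lemC hb hb1 hb2 a b h1 h2 h3
    · exact absurd b h23
    · rcases lt_trichotomy x₁ x₃ with c | c | c
      · exact lemC hb hb1 hb2 c b h1 h3 h2
      · exact absurd c h13
      · exact lemC hb hb1 hb2 c a h3 h1 h2
  · exact absurd a h12
  · rcases lt_trichotomy x₁ x₃ with b | b | b
    · exact lemC hb hb1 hb2 a b h2 h1 h3
    · exact absurd b h13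
    · rcases lt_trichotomy x₂ x₃ with c | c | c
      · exact lemC hb hb1 hb2 c b h2 h3 h1
      · exact absurd c h23
      · exact lemC hb hb1 hb2 c a h3 h2 h1

/-- If the energy levels take at least three distinct values, then the (unnormalized)
Gibbs vectors at three distinct inverse temperatures are linearly independent. -/
theorem gibbs_vectors_linearIndependent {d : ℕ} (β₁ β₂ β₃ : ℝ)
    (h12 : β₁ < β₂) (h23 : β₂ < β₃) (ε : Fin d → ℝ)
    (hε : ∃ n₁ n₂ n₃ : Fin d, ε n₁ ≠ ε n₂ ∧ ε n₁ ≠ ε n₃ ∧ ε n₂ ≠ ε n₃) :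
    LinearIndependent ℝ
      ![(fun n => Real.exp (-β₁ * ε n) : Fin d → ℝ),
        (fun n => Real.exp (-β₂ * ε n) : Fin d → ℝ),
        (fun n => Real.exp (-β₃ * ε n) : Fin d → ℝ)] := by
  obtain ⟨n₁, n₂, n₃, e12, e13, e23⟩ := hε
  rw [Fintype.linearIndependent_iff]
  intro g hg i
  have hfun : ∀ n : Fin d, g 0 * Real.exp (-β₁ * ε n) + g 1 * Real.exp (-β₂ * ε n)
      + g 2 * Real.exp (-β₃ * ε n) = 0 := by
    intro n
    have := congrFun hg n
    simpa [Fin.sum_univ_three, Matrix.cons_val_zero, Matrix.cons_val_one, Matrix.head_cons,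
      add_assoc] using this
  have key : ∀ n : Fin d, g 0 * Real.exp ((β₃ - β₁) * ε n) + g 1 * Real.exp ((β₃ - β₂) * ε n)
      + g 2 = 0 := by
    intro n
    have h := hfun n
    have hmul : Real.exp (β₃ * ε n) * (g 0 * Real.exp (-β₁ * ε n) + g 1 * Real.exp (-β₂ * ε n)
        + g 2 * Real.exp (-β₃ * ε n)) = 0 := by rw [h, mul_zero]
    calc g 0 * Real.exp ((β₃ - β₁) * ε n) + g 1 * Real.exp ((β₃ - β₂) * ε n) + g 2
        = Real.exp (β₃ * ε n) * (g 0 * Real.exp (-β₁ * ε n) + g 1 * Real.exp (-β₂ * ε n)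
          + g 2 * Real.exp (-β₃ * ε n)) := by
          rw [show (β₃ - β₁) * ε n = β₃ * ε n + -β₁ * ε n by ring,
            show (β₃ - β₂) * ε n = β₃ * ε n + -β₂ * ε n by ring, Real.exp_add, Real.exp_add]
          have : Real.exp (β₃ * ε n) * Real.exp (-β₃ * ε n) = 1 := by
            rw [← Real.exp_add]; simp
          linear_combination (-(g 2)) * this
      _ = 0 := hmul
  have hb : (β₃ - β₁ : ℝ) ≠ β₃ - β₂ := by intro h; apply ne_of_lt h12; linarith
  have hb1 : (β₃ - β₁ : ℝ) ≠ 0 := ne_of_gt (by linarith)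
  have hb2 : (β₃ - β₂ : ℝ) ≠ 0 := ne_of_gt (by linarith)
  obtain ⟨hg0, hg1, hg2⟩ := lemC' hb hb1 hb2 e12 e13 e23 (key n₁) (key n₂) (key n₃)
  fin_cases i
  · exact hg0
  · exact hg1
  · exact hg2
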